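/- Let X be a locally compact metric space with an accumulation point. Then for every sequence x : ω → X, each isolated point of Γ_x(FS) belongs to Λ_x(FS). -/

import Mathlib

open Set Filter Topology

/-- `FS(D)`: the set of finite sums of distinct elements of `D`. -/
def FS (D : Set ℕ) : Set ℕ :=
  {n | ∃ α : Finset ℕ, ↑α ⊆ D ∧ α.Nonempty ∧ ∑ i ∈ α, i = n}

variable {X : Type*}

/-- `η` is an `FS`-limit point of the sequence `x : ω → X`. -/
def IsFSLimitPoint [TopologicalSpace X] (x : ℕ → X) (η : X) : Prop :=
  ∃ D : Set ℕ, D.Infinite ∧ ∀ U ∈ 𝓝 η, ∃ K : Set ℕ, K.Finite ∧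
    ∀ n ∈ FS (D \ K), x n ∈ U

/-- `η` is an `FS`-cluster point of the sequence `x : ω → X`. -/
def IsFSClusterPoint [TopologicalSpace X] (x : ℕ → X) (η : X) : Prop :=
  ∀ U ∈ 𝓝 η, ∃ D : Set ℕ, D.Infinite ∧ FS D ⊆ {n | x n ∈ U}

attribute [local instance] Ultrafilter.add Ultrafilter.addSemigroup

lemma FS_mono {D₁ D₂ : Set ℕ} (h : D₁ ⊆ D₂) : FS D₁ ⊆ FS D₂ :=
  fun _ ⟨α, hα, hne, hsum⟩ => ⟨α, hα.trans h, hne, hsum⟩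

/-- Every element of a stream FS-set is a sum over a finite nonempty index set. -/
lemma FSaux.exists_finset {b : Stream' ℕ} {m : ℕ} (h : m ∈ Hindman.FS b) :
    ∃ s : Finset ℕ, s.Nonempty ∧ ∑ i ∈ s, b.get i = m := by
  induction h with
  | head' a => exact ⟨{0}, ⟨0, by simp⟩, by simp [Stream'.head]⟩
  | tail' a m h ih =>
      obtain ⟨s, hne, hsum⟩ := ih
      refine ⟨s.image (· + 1), hne.image _, ?_⟩
      rw [Finset.sum_image (fun i _ j _ hij => by simpa using hij)]
      simpa using hsum
  | cons' a m h ih =>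
      obtain ⟨s, hne, hsum⟩ := ih
      refine ⟨insert 0 (s.image (· + 1)), ⟨0, Finset.mem_insert_self _ _⟩, ?_⟩
      rw [Finset.sum_insert (by simp), Finset.sum_image (fun i _ j _ hij => by simpa using hij)]
      simp only [Stream'.get_tail] at hsum
      have : a.get 0 = a.head := rfl
      rw [this]
      simpa using congrArg (a.head + ·) hsum

/-- Sums over index sets with all indices `≥ k` lie in `FS (b.drop k)`. -/
lemma FSaux.sum_mem_drop (b : Stream' ℕ) (k : ℕ) (s : Finset ℕ) (hne : s.Nonempty)
    (hk : ∀ i ∈ s, k ≤ i) : ∑ i ∈ s, b.get i ∈ Hindman.FS (b.drop k) := by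
  have heq : ∑ i ∈ s, b.get i = ∑ j ∈ s.image (· - k), (b.drop k).get j := by
    rw [Finset.sum_image (fun i hi j hj hij => by
      have := hk i hi; have := hk j hj; omega)]
    refine Finset.sum_congr rfl fun i hi => ?_
    rw [Stream'.get_drop]
    congr 1
    have := hk i hi; omega
  rw [heq]
  exact Hindman.FS.finset_sum _ _ (hne.image _)

/-- Converting a stream FS-set (of positive naturals) into a set FS-set, with tails. -/
lemma FSaux.exists_set (b : Stream' ℕ) (hpos : ∀ n ∈ Hindman.FS b, 0 < n) :
    ∃ D : Set ℕ, D.Infinite ∧ ∀ k : ℕ, ∃ K : Set ℕ, K.Finite ∧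
      FS (D \ K) ⊆ Hindman.FS (b.drop k) := by
  by_cases hfin : (Set.range b.get).Finite
  · -- some value `c` has infinite fiber
    have hc : ∃ c, (b.get ⁻¹' {c}).Infinite := by
      by_contra h
      push_neg at h
      have hsub : (Set.univ : Set ℕ) ⊆ ⋃ c ∈ Set.range b.get, b.get ⁻¹' {c} :=
        fun i _ => Set.mem_biUnion ⟨i, rfl⟩ rfl
      exact Set.infinite_univ ((hfin.biUnion fun c _ => h c).subset hsub)
    obtain ⟨c, hcinf⟩ := hc
    obtain ⟨i0, hi0⟩ := hcinf.nonempty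
    have hcpos : 0 < c := by
      have := hpos _ (Hindman.FS.singleton b i0)
      simpa [hi0.out] using hi0.out ▸ this
    refine ⟨Set.range (fun i : ℕ => c * 2 ^ i), ?_, fun k => ⟨∅, Set.finite_empty, ?_⟩⟩
    · exact Set.infinite_range_of_injective (fun i j hij => by
        have h2 : (2:ℕ) ^ i = 2 ^ j := Nat.eq_of_mul_eq_mul_left hcpos hij
        exact Nat.pow_right_injective le_rfl h2)
    · rintro n ⟨α, hα, hne, rfl⟩
      rw [Set.diff_empty] at hα
      have hdvd : c ∣ ∑ i ∈ α, i := Finset.dvd_sum fun v hv => by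
        obtain ⟨i, rfl⟩ := hα hv; exact Dvd.intro _ rfl
      have hposn : 0 < ∑ i ∈ α, i := Finset.sum_pos (fun v hv => by
        obtain ⟨i, rfl⟩ := hα hv; positivity) hne
      obtain ⟨m, hmeq⟩ := hdvd
      have hm : 0 < m := by
        rcases Nat.eq_zero_or_pos m with h0 | h
        · rw [h0, mul_zero] at hmeq; omega
        · exact h
      -- pick `m` indices ≥ k in the fiber of `c`
      have hinf2 : ((b.get ⁻¹' {c}) \ {i | i < k}).Infinite :=
        hcinf.diff (Set.finite_Iio k)
      obtain ⟨s, hssub, hscard⟩ := hinf2.exists_subset_card_eq m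
      have hsum : ∑ i ∈ s, b.get i = c * m := by
        rw [Finset.sum_congr rfl (fun i hi => (hssub hi).1 : ∀ i ∈ s, b.get i = c)]
        rw [Finset.sum_const, hscard, smul_eq_mul, mul_comm]
      rw [hmeq, ← hsum]
      exact FSaux.sum_mem_drop b k s (Finset.card_pos.mp (hscard ▸ hm))
        (fun i hi => by have := (hssub hi).2; simpa using this)
  · -- infinite range
    rw [← Set.not_infinite, not_not] at hfin
    refine ⟨Set.range b.get, hfin, fun k => ⟨b.get '' {i | i < k},
      (Set.finite_Iio k).image _, ?_⟩⟩
    rintro n ⟨α, hα, hne, rfl⟩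
    classical
    set g : ℕ → ℕ := Function.invFun b.get with hg
    have hgv : ∀ v ∈ α, b.get (g v) = v := fun v hv =>
      Function.invFun_eq (hα hv).1
    have hgk : ∀ v ∈ α, k ≤ g v := by
      intro v hv
      by_contra hlt
      exact (hα hv).2 ⟨g v, not_le.mp hlt, hgv v hv⟩
    have hsum : ∑ v ∈ α, v = ∑ i ∈ α.image g, b.get i := by
      rw [Finset.sum_image (fun v hv w hw hvw => by
        rw [← hgv v hv, ← hgv w hw, hvw])]
      exact (Finset.sum_congr rfl fun v hv => (hgv v hv).symm)
    rw [hsum]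
    exact FSaux.sum_mem_drop b k _ (hne.image _)
      (fun i hi => by
        obtain ⟨v, hv, rfl⟩ := Finset.mem_image.mp hi
        exact hgk v hv)


/-- Diagonal version of `Hindman.exists_FS_of_large`: given countably many sets in an
idempotent ultrafilter, there is a stream whose `k`-th tail's FS-set lies in the `k`-th set. -/
lemma FSaux.exists_stream_of_large (U : Ultrafilter ℕ) (hU : U + U = U) (t : ℕ → Set ℕ)
    (ht : ∀ k, t k ∈ U) : ∃ b : Stream' ℕ, ∀ k, Hindman.FS (b.drop k) ⊆ t k := by
  have exists_elem : ∀ {s : Set ℕ} (_ : s ∈ U),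
      (s ∩ { m | ∀ᶠ m' in U, m + m' ∈ s }).Nonempty := fun {s} hs =>
    Ultrafilter.nonempty_of_mem (inter_mem hs <| by rwa [← hU] at hs)
  let St := { p : ℕ × Set ℕ // p.2 ∈ U ∧ p.2 ⊆ t p.1 }
  let elem : St → ℕ := fun p => (exists_elem p.2.1).some
  have elem_mem : ∀ p : St, elem p ∈ p.1.2 := fun p => (exists_elem p.2.1).some_mem.1
  have elem_ev : ∀ p : St, { m | elem p + m ∈ p.1.2 } ∈ U := fun p =>
    (exists_elem p.2.1).some_mem.2
  let succ : St → St := fun p =>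
    ⟨(p.1.1 + 1, p.1.2 ∩ { m | elem p + m ∈ p.1.2 } ∩ t (p.1.1 + 1)),
      inter_mem (inter_mem p.2.1 (elem_ev p)) (ht _), Set.inter_subset_right⟩
  let init : St := ⟨(0, t 0), ht 0, subset_rfl⟩
  refine ⟨Stream'.corec elem succ init, ?_⟩
  have key : ∀ (a : Stream' ℕ), ∀ m ∈ Hindman.FS a, ∀ p : St,
      a = Stream'.corec elem succ p → m ∈ p.1.2 := by
    intro a m h
    induction h with
    | head' a =>
        rintro p rfl
        rw [Stream'.corec_eq, Stream'.head_cons]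
        exact elem_mem p
    | tail' a m h ih =>
        rintro p rfl
        have := ih (succ p) (by rw [Stream'.corec_eq, Stream'.tail_cons])
        exact this.1.1
    | cons' a m h ih =>
        rintro p rfl
        have hm : m ∈ (succ p).1.2 := ih (succ p) (by rw [Stream'.corec_eq, Stream'.tail_cons])
        have hd : (Stream'.corec elem succ p).head = elem p := by
          rw [Stream'.corec_eq, Stream'.head_cons]
        rw [hd]
        exact hm.1.2
  have drop_eq : ∀ k : ℕ, (Stream'.corec elem succ init).drop k
      = Stream'.corec elem succ (succ^[k] init) := by
    intro k
    induction k with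
    | zero => rfl
    | succ k ih =>
        rw [Function.iterate_succ_apply']
        rw [← Stream'.tail_drop', ih, Stream'.corec_eq, Stream'.tail_cons]
  have idx : ∀ k : ℕ, (succ^[k] init).1.1 = k := by
    intro k
    induction k with
    | zero => rfl
    | succ k ih => rw [Function.iterate_succ_apply']; exact congrArg (· + 1) ih
  intro k m hm
  rw [drop_eq k] at hm
  have := key _ m hm (succ^[k] init) rfl
  have hsub := (succ^[k] init).2.2
  rw [idx k] at hsub
  exact hsub this


theorem isolated_gamma_fs_mem_lambda_fs
    [MetricSpace X] [LocallyCompactSpace X] (hacc : ∃ p : X, (𝓝[≠] p).NeBot)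
    (x : ℕ → X) (p : X)
    (hp : p ∈ {η | IsFSClusterPoint x η} ∧
      ∃ U ∈ 𝓝 p, U ∩ {η | IsFSClusterPoint x η} = {p}) :
    p ∈ {η | IsFSLimitPoint x η} := by
  obtain ⟨hclp, U₀, hU₀, hU₀iso⟩ := hp
  obtain ⟨C, hCmem, hCsub, hCcomp⟩ := LocallyCompactSpace.local_compact_nhds p U₀ hU₀
  obtain ⟨D0, hD0inf, hD0⟩ := hclp C hCmem
  set D1 : Set ℕ := D0 \ {0} with hD1def
  have hD1inf : D1.Infinite := hD0inf.diff (Set.finite_singleton 0)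
  have hD1C : FS D1 ⊆ {n | x n ∈ C} := (FS_mono Set.diff_subset).trans hD0
  have hD1pos : ∀ n ∈ FS D1, 0 < n := by
    rintro n ⟨α, hα, hne, rfl⟩
    exact Finset.sum_pos (fun i hi => Nat.pos_of_ne_zero (hα hi).2) hne
  -- enumerate D1 as a stream
  let e := hD1inf.natEmbedding
  let a : Stream' ℕ := fun i => (e i : ℕ)
  have ha : Hindman.FS a ⊆ FS D1 := by
    intro m hm
    obtain ⟨s, hne, hsum⟩ := FSaux.exists_finset hm
    refine ⟨s.image (fun i => (e i : ℕ)), ?_, hne.image _, ?_⟩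
    · intro v hv
      simp only [Finset.coe_image, Set.mem_image] at hv
      obtain ⟨i, _, rfl⟩ := hv
      exact (e i).2
    · rw [Finset.sum_image (fun i _ j _ hij => e.injective (Subtype.coe_injective hij))]
      exact hsum
  obtain ⟨U, hUidem, hUa⟩ := Hindman.exists_idempotent_ultrafilter_le_FS a
  have hUa' : Hindman.FS a ∈ U := hUa
  -- the ultrafilter limit q of x along U
  have hC_in : C ∈ Ultrafilter.map x U :=
    Ultrafilter.mem_map.mpr (Filter.mem_of_superset hUa' (fun m hm => hD1C (ha hm)))
  obtain ⟨q, hqC, hq⟩ := hCcomp.ultrafilter_le_nhds (Ultrafilter.map x U)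
    (le_principal_iff.mpr hC_in)
  -- q is an FS-cluster point
  have hqΓ : IsFSClusterPoint x q := by
    intro V hV
    have hs : {n | x n ∈ V} ∈ U := Ultrafilter.mem_map.mp (hq hV)
    obtain ⟨b, hb⟩ := Hindman.exists_FS_of_large U hUidem _ (inter_mem hs hUa')
    have hbpos : ∀ n ∈ Hindman.FS b, 0 < n := fun n hn => hD1pos n (ha (hb hn).2)
    obtain ⟨D2, hD2inf, hK⟩ := FSaux.exists_set b hbpos
    obtain ⟨K, hKfin, hKsub⟩ := hK 0
    refine ⟨D2 \ K, hD2inf.diff hKfin, fun n hn => ?_⟩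
    have : n ∈ Hindman.FS (b.drop 0) := hKsub hn
    rw [Stream'.drop_zero] at this
    exact (hb this).1
  -- by isolation, q = p
  have hqp : q = p := by
    have : q ∈ U₀ ∩ {η | IsFSClusterPoint x η} := ⟨hCsub hqC, hqΓ⟩
    rwa [hU₀iso, Set.mem_singleton_iff] at this
  rw [hqp] at hq
  -- build the limit witness
  have hball : ∀ k : ℕ,
      ({n | x n ∈ Metric.ball p (1 / ((k : ℝ) + 1))} ∩ Hindman.FS a) ∈ U := fun k =>
    inter_mem (Ultrafilter.mem_map.mp (hq (Metric.ball_mem_nhds p (by positivity)))) hUa'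
  obtain ⟨b, hb⟩ := FSaux.exists_stream_of_large U hUidem _ hball
  have hbpos : ∀ n ∈ Hindman.FS b, 0 < n := by
    intro n hn
    have : n ∈ Hindman.FS (b.drop 0) := by rwa [Stream'.drop_zero]
    exact hD1pos n (ha (hb 0 this).2)
  obtain ⟨D2, hD2inf, hK⟩ := FSaux.exists_set b hbpos
  refine ⟨D2, hD2inf, fun V hV => ?_⟩
  obtain ⟨ε, hε, hsubV⟩ := Metric.mem_nhds_iff.mp hV
  obtain ⟨k, hk⟩ := exists_nat_one_div_lt hε
  obtain ⟨K, hKfin, hKsub⟩ := hK k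
  refine ⟨K, hKfin, fun n hn => ?_⟩
  have hmem : x n ∈ Metric.ball p (1 / ((k : ℝ) + 1)) := (hb k (hKsub hn)).1
  exact hsubV (Metric.ball_subset_ball hk.le hmem)
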